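/- Let Φ be the MPP instance reduced from a 3SAT instance (X, C) with n variables and m clauses (as described in the context). If Φ admits a solution with total arrival time at most (n+m)(m+2), then (X, C) is satisfiable; moreover, a satisfying assignment is obtained by setting x_i to false if the variable robot r_{x_i} traverses the i-th upper path and to true if it traverses the i-th lower path. -/
import Mathlib


/-!
Formalization of multi-robot path planning on graphs (MPP).

An MPP instance consists of a connected simple graph `G` on a vertex type `V`,
a finite set of robots (an index type `R`), and injective start/goal
configurations `xI xG : R → V`.  A scheduled path is a map `ℕ → V`.
-/

namespace MPPFormal

variable {V R : Type}

/-- The arrival time of a path `p` with goal `g`: the smallest time `t`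
with `p t = g`. -/
noncomputable def arrivalTime (g : V) (p : ℕ → V) : ℕ := sInf {t | p t = g}

/-- A feasible scheduled path from `s` to `g` in the graph `G`:
it starts at `s`, reaches `g` at some time, stays at `g` forever after the
first time it reaches `g`, and at every time step it either traverses an
edge of `G` or stays put. -/
def FeasiblePath (G : SimpleGraph V) (s g : V) (p : ℕ → V) : Prop :=
  p 0 = s ∧ (∃ t, p t = g) ∧ (∀ t, arrivalTime g p ≤ t → p t = g) ∧
    ∀ t, G.Adj (p t) (p (t + 1)) ∨ p t = p (t + 1)

/-- Two scheduled paths collide if they meet at the same vertex at the same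
time, or if they swap along an edge head-on. -/
def Collide (p q : ℕ → V) : Prop :=
  (∃ t, p t = q t) ∨ ∃ t, p t = q (t + 1) ∧ p (t + 1) = q t ∧ p t ≠ p (t + 1)

/-- The length of a scheduled path: the number of time steps at which it
actually moves. -/
noncomputable def pathLen (p : ℕ → V) : ℕ := Set.ncard {t | p t ≠ p (t + 1)}

/-- A solution to the MPP instance `(G, R, xI, xG)`: a family of pairwise
non-colliding feasible paths, one per robot. -/
def IsSolution (G : SimpleGraph V) (xI xG : R → V) (p : R → ℕ → V) : Prop :=
  (∀ i, FeasiblePath G (xI i) (xG i) (p i)) ∧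
    Pairwise fun i j => ¬ Collide (p i) (p j)

/-- `(G, xI, xG)` together with the robot index type `R` forms an MPP
instance: the graph is connected and the start and goal configurations are
injective. -/
def IsMPPInstance (G : SimpleGraph V) (xI xG : R → V) : Prop :=
  G.Connected ∧ Function.Injective xI ∧ Function.Injective xG

variable [Fintype R]

/-- Total arrival time of a solution. -/
noncomputable def totalTime (xG : R → V) (p : R → ℕ → V) : ℕ :=
  ∑ i, arrivalTime (xG i) (p i)

/-- Makespan (last arrival time) of a solution. -/
noncomputable def makespan (xG : R → V) (p : R → ℕ → V) : ℕ :=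
  Finset.univ.sup fun i => arrivalTime (xG i) (p i)

/-- Total distance traveled in a solution. -/
noncomputable def totalDist (p : R → ℕ → V) : ℕ := ∑ i, pathLen (p i)

/-- Maximum single-robot distance of a solution. -/
noncomputable def maxDist (p : R → ℕ → V) : ℕ :=
  Finset.univ.sup fun i => pathLen (p i)

/-- Minimum total arrival time over all solutions. -/
noncomputable def minTotalTime (G : SimpleGraph V) (xI xG : R → V) : ℕ :=
  sInf {c | ∃ p, IsSolution G xI xG p ∧ totalTime xG p = c}

/-- Minimum makespan over all solutions. -/
noncomputable def minMakespan (G : SimpleGraph V) (xI xG : R → V) : ℕ :=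
  sInf {c | ∃ p, IsSolution G xI xG p ∧ makespan xG p = c}

/-- Minimum total distance over all solutions. -/
noncomputable def minTotalDist (G : SimpleGraph V) (xI xG : R → V) : ℕ :=
  sInf {c | ∃ p, IsSolution G xI xG p ∧ totalDist p = c}

/-- Minimum maximum distance over all solutions. -/
noncomputable def minMaxDist (G : SimpleGraph V) (xI xG : R → V) : ℕ :=
  sInf {c | ∃ p, IsSolution G xI xG p ∧ maxDist p = c}

end MPPFormal

/-!
The reduction from 3SAT to MPP.

A 3SAT instance over `n` variables with `m` clauses assigns to each clause
`j : Fin m` three literals; a literal is a pair `(i, b) : Fin n × Bool`,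
`b = true` meaning the non-negated variable `x_i` and `b = false` the
negated literal `¬ x_i`.  The three literals of each clause involve three
distinct variables.
-/

namespace MPPFormal

/-- A 3SAT instance with variables `x_1, …, x_n` and clauses `c_1, …, c_m`. -/
structure ThreeSat (n m : ℕ) where
  lit : Fin m → Fin 3 → Fin n × Bool
  distinctVars : ∀ j (k k' : Fin 3), k ≠ k' → (lit j k).1 ≠ (lit j k').1

/-- An assignment `a` satisfies the instance if every clause contains a true
literal. -/
def ThreeSat.SatisfiedBy {n m : ℕ} (sat : ThreeSat n m) (a : Fin n → Bool) : Prop :=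
  ∀ j, ∃ k, a (sat.lit j k).1 = (sat.lit j k).2

/-- Satisfiability of a 3SAT instance. -/
def ThreeSat.Satisfiable {n m : ℕ} (sat : ThreeSat n m) : Prop :=
  ∃ a, sat.SatisfiedBy a

/-- Vertices of the MPP instance `Φ` reduced from a 3SAT instance with `n`
variables and `m` clauses:
* `vx i` is the left endpoint `v_{x_i}` of the `i`-th variable strip (start of
  the variable robot `r_{x_i}`);
* `vxg i` is the right endpoint `v_{x_i}^g` (goal of `r_{x_i}`);
* `mid i side k` is the interior vertex of the `i`-th upper (`side = true`)
  or lower (`side = false`) path lying at distance `k + 1` from `vx i`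
  (each of the two paths has length `m + 2`, hence `m + 1` interior
  vertices, `k : Fin (m+1)`);
* `vc j` is the start vertex `v_{c_j}` of the clause robot `r_{c_j}`;
* `vcg j` is its goal vertex `v_{c_j}^g`. -/
inductive PhiV (n m : ℕ) where
  | vx (i : Fin n)
  | vxg (i : Fin n)
  | mid (i : Fin n) (side : Bool) (k : Fin (m + 1))
  | vc (j : Fin m)
  | vcg (j : Fin m)
deriving DecidableEq

/-- Base relation generating the edges of `Φ`:
the two length-`(m+2)` paths of each variable strip; an edge from `v_{c_j}`
to the vertex at distance `j + 1` (`1`-indexed: distance `j`) from `v_{x_i}`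
on the upper (resp. lower) path of `x_i` for each non-negated (resp. negated)
literal of `c_j`; the path `v_{c_1}^g - ⋯ - v_{c_m}^g`; and edges from
`v_{c_m}^g` to every `v_{x_i}`. -/
def phiRel {n m : ℕ} (sat : ThreeSat n m) : PhiV n m → PhiV n m → Prop
  | PhiV.vx i, PhiV.mid i' _ k => i = i' ∧ (k : ℕ) = 0
  | PhiV.mid i s k, PhiV.mid i' s' k' => i = i' ∧ s = s' ∧ (k' : ℕ) = (k : ℕ) + 1
  | PhiV.mid i _ k, PhiV.vxg i' => i = i' ∧ (k : ℕ) = m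
  | PhiV.vc j, PhiV.mid i s k => (∃ l, sat.lit j l = (i, s)) ∧ (k : ℕ) = (j : ℕ)
  | PhiV.vcg j, PhiV.vcg j' => (j' : ℕ) = (j : ℕ) + 1
  | PhiV.vcg j, PhiV.vx _ => (j : ℕ) + 1 = m
  | _, _ => False

/-- The graph of the reduced MPP instance `Φ`. -/
def phiGraph {n m : ℕ} (sat : ThreeSat n m) : SimpleGraph (PhiV n m) :=
  SimpleGraph.fromRel (phiRel sat)

/-- Start configuration of `Φ`: the variable robot `r_{x_i}` (index
`Sum.inl i`) starts at `v_{x_i}`; the clause robot `r_{c_j}` (index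
`Sum.inr j`) starts at `v_{c_j}`. -/
def phiStart {n m : ℕ} : Fin n ⊕ Fin m → PhiV n m :=
  Sum.elim PhiV.vx PhiV.vc

/-- Goal configuration of `Φ`: `r_{x_i}` must reach `v_{x_i}^g` and `r_{c_j}`
must reach `v_{c_j}^g`. -/
def phiGoal {n m : ℕ} : Fin n ⊕ Fin m → PhiV n m :=
  Sum.elim PhiV.vxg PhiV.vcg

end MPPFormal

namespace MPPFormal


/-- Steps of a feasible-style path move Lipschitz functions by at most the
elapsed time. -/
lemma lipschitz_bound {V : Type} (G : SimpleGraph V) (F : V → ℤ)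
    (hF : ∀ u v, G.Adj u v → |F u - F v| ≤ 1) (q : ℕ → V)
    (hq : ∀ t, G.Adj (q t) (q (t + 1)) ∨ q t = q (t + 1)) :
    ∀ a b : ℕ, a ≤ b → |F (q b) - F (q a)| ≤ (b : ℤ) - a := by
  intro a b hab
  induction b with
  | zero => interval_cases a; simp
  | succ b ih =>
    rcases Nat.lt_or_ge a (b+1) with h | h
    · have h1 := ih (Nat.lt_succ_iff.mp h)
      have h2 : |F (q (b+1)) - F (q b)| ≤ 1 := by
        rcases hq b with h' | h'
        · exact hF _ _ h'.symm
        · simp [h']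
      have := abs_sub_abs_le_abs_sub (F (q (b+1)) - F (q a)) (F (q b) - F (q a))
      have h3 : |F (q (b+1)) - F (q a)| ≤ |F (q b) - F (q a)| + |F (q (b+1)) - F (q b)| := by
        calc |F (q (b+1)) - F (q a)| = |(F (q b) - F (q a)) + (F (q (b+1)) - F (q b))| := by
              ring_nf
            _ ≤ _ := abs_add_le _ _
      push_cast
      omega
    · have : a = b + 1 := le_antisymm hab h
      subst this; simp

/-- Potential function for the variable robots. -/
def fpot {n m : ℕ} : PhiV n m → ℤ
  | PhiV.vx _ => 0
  | PhiV.vxg _ => (m : ℤ) + 2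
  | PhiV.mid _ _ k => (k : ℕ) + 1
  | PhiV.vc j => (j : ℕ) + 2
  | PhiV.vcg j => (m : ℤ) - 1 - (j : ℕ)

/-- Potential function for the clause robot `j`. -/
def gpot {n m : ℕ} (j : Fin m) : PhiV n m → ℤ
  | PhiV.vx _ => (m : ℤ) - (j : ℕ)
  | PhiV.vxg _ => 2 * (m : ℤ) + 2 - (j : ℕ)
  | PhiV.mid _ _ k => (m : ℤ) + 1 + (k : ℕ) - (j : ℕ)
  | PhiV.vc j' => (m : ℤ) + 2 + (j' : ℕ) - (j : ℕ)
  | PhiV.vcg j' => ((j' : ℕ) : ℤ) - ((j : ℕ) : ℤ)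

lemma fromRel_lip {V : Type} {r : V → V → Prop} {F : V → ℤ}
    (h : ∀ u v, r u v → |F u - F v| ≤ 1) :
    ∀ u v, (SimpleGraph.fromRel r).Adj u v → |F u - F v| ≤ 1 := by
  intro u v hadj
  rw [SimpleGraph.fromRel_adj] at hadj
  rcases hadj.2 with h' | h'
  · exact h _ _ h'
  · rw [abs_sub_comm]; exact h _ _ h'

lemma fpot_lip {n m : ℕ} (sat : ThreeSat n m) :
    ∀ u v, (phiGraph sat).Adj u v → |fpot u - fpot v| ≤ 1 := by
  apply fromRel_lip
  intro u v h
  cases u <;> cases v <;> simp only [phiRel] at h <;>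
    first
    | exact absurd h not_false
    | (simp only [fpot]; rw [abs_le]; omega)

lemma gpot_lip {n m : ℕ} (sat : ThreeSat n m) (j : Fin m) :
    ∀ u v, (phiGraph sat).Adj u v → |gpot j u - gpot j v| ≤ 1 := by
  apply fromRel_lip
  intro u v h
  cases u <;> cases v <;> simp only [phiRel] at h <;>
    first
    | exact absurd h not_false
    | (simp only [gpot]; rw [abs_le]; omega)

lemma forced_up {V : Type} (G : SimpleGraph V) (F : V → ℤ)
    (hF : ∀ u v, G.Adj u v → |F u - F v| ≤ 1) (q : ℕ → V)
    (hq : ∀ t, G.Adj (q t) (q (t + 1)) ∨ q t = q (t + 1)) (T : ℕ)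
    (hT : F (q T) - F (q 0) = (T : ℤ)) :
    ∀ t, t ≤ T → F (q t) = F (q 0) + t := by
  intro t ht
  have h1 := lipschitz_bound G F hF q hq 0 t (by omega)
  have h2 := lipschitz_bound G F hF q hq t T ht
  rw [abs_le] at h1 h2
  omega

lemma forced_down {V : Type} (G : SimpleGraph V) (F : V → ℤ)
    (hF : ∀ u v, G.Adj u v → |F u - F v| ≤ 1) (q : ℕ → V)
    (hq : ∀ t, G.Adj (q t) (q (t + 1)) ∨ q t = q (t + 1)) (T : ℕ)
    (hT : F (q T) - F (q 0) = -(T : ℤ)) :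
    ∀ t, t ≤ T → F (q t) = F (q 0) - t := by
  intro t ht
  have h1 := lipschitz_bound G F hF q hq 0 t (by omega)
  have h2 := lipschitz_bound G F hF q hq t T ht
  rw [abs_le] at h1 h2
  omega

lemma step_adj {V : Type} {G : SimpleGraph V} {F : V → ℤ} {q : ℕ → V}
    (hq : ∀ t, G.Adj (q t) (q (t + 1)) ∨ q t = q (t + 1)) (t : ℕ)
    (hne : F (q t) ≠ F (q (t + 1))) : G.Adj (q t) (q (t + 1)) := by
  rcases hq t with h | h
  · exact h
  · exact absurd (congrArg F h) hne

lemma arrival_spec {V : Type} (g : V) (q : ℕ → V) (h : ∃ t, q t = g) :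
    q (arrivalTime g q) = g :=
  Nat.sInf_mem h

lemma arrival_lb {V : Type} (G : SimpleGraph V) (F : V → ℤ) {s g : V} {q : ℕ → V}
    (hF : ∀ u v, G.Adj u v → |F u - F v| ≤ 1)
    (hfeas : FeasiblePath G s g q) :
    |F g - F s| ≤ (arrivalTime g q : ℤ) := by
  obtain ⟨h0, hex, harr, hstep⟩ := hfeas
  have := lipschitz_bound G F hF q hstep 0 (arrivalTime g q) (Nat.zero_le _)
  rw [h0, arrival_spec g q hex] at this
  simpa using this

lemma var_traj {n m : ℕ} (sat : ThreeSat n m) (i : Fin n) (q : ℕ → PhiV n m)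
    (hfeas : FeasiblePath (phiGraph sat) (PhiV.vx i) (PhiV.vxg i) q)
    (hA : arrivalTime (PhiV.vxg i) q = m + 2) :
    ∃ s : Bool, ∀ t (ht1 : 1 ≤ t) (ht2 : t ≤ m + 1),
      q t = PhiV.mid i s ⟨t - 1, by omega⟩ := by
  obtain ⟨h0, hex, harr, hstep⟩ := hfeas
  have hgoal : q (m + 2) = PhiV.vxg i := harr (m + 2) (by omega)
  have hf : ∀ t, t ≤ m + 2 → fpot (q t) = t := by
    have := forced_up (phiGraph sat) fpot (fpot_lip sat) q hstep (m + 2)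
      (by rw [hgoal, h0]; show ((m : ℤ) + 2) - 0 = ((m + 2 : ℕ) : ℤ); push_cast; ring)
    intro t ht
    have h := this t ht
    rw [h0] at h
    simpa [fpot] using h
  have hadj : ∀ t, t < m + 2 → (phiGraph sat).Adj (q t) (q (t + 1)) := by
    intro t ht
    apply step_adj (F := fpot) hstep
    rw [hf t (by omega), hf (t + 1) (by omega)]
    omega
  have hbase : ∃ s : Bool, q 1 = PhiV.mid i s ⟨0, by omega⟩ := by
    have ha := hadj 0 (by omega)
    rw [h0] at ha
    have hf1 : fpot (q 1) = 1 := by rw [hf 1 (by omega)]; norm_num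
    rw [phiGraph, SimpleGraph.fromRel_adj] at ha
    have hrel := ha.2
    cases hq1 : q 1 with
    | vx i' => rw [hq1] at hrel; simp only [phiRel] at hrel; simp at hrel
    | vxg i' => rw [hq1] at hrel; simp only [phiRel] at hrel; simp at hrel
    | vc j' => rw [hq1] at hrel; simp only [phiRel] at hrel; simp at hrel
    | vcg j' =>
      rw [hq1] at hrel hf1
      simp only [phiRel, false_or] at hrel
      simp only [fpot] at hf1
      omega
    | mid i' s' k' =>
      rw [hq1] at hrel
      simp only [phiRel, or_false] at hrel
      obtain ⟨hii, hk⟩ := hrel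
      refine ⟨s', ?_⟩
      rw [← hii]
      have : k' = (⟨0, by omega⟩ : Fin (m + 1)) := Fin.ext (by simpa using hk)
      rw [this]
  obtain ⟨s, hs⟩ := hbase
  refine ⟨s, ?_⟩
  intro t
  induction t with
  | zero => intro h1 _; omega
  | succ t ih =>
    intro _ ht2
    rcases Nat.eq_zero_or_pos t with ht0 | ht0
    · subst ht0; simpa using hs
    · have hqt := ih ht0 (by omega)
      have ha := hadj t (by omega)
      have hft1 : fpot (q (t + 1)) = (t : ℤ) + 1 := by
        rw [hf (t + 1) (by omega)]; push_cast; ring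
      rw [hqt, phiGraph, SimpleGraph.fromRel_adj] at ha
      have hrel := ha.2
      cases hq1 : q (t + 1) with
      | vx i' =>
        rw [hq1] at hft1
        simp only [fpot] at hft1
        omega
      | vxg i' =>
        rw [hq1] at hrel hft1
        simp only [phiRel, false_or] at hrel
        simp only [fpot] at hft1
        have hkv : (⟨t - 1, by omega⟩ : Fin (m + 1)).val = t - 1 := rfl
        omega
      | vcg j' => rw [hq1] at hrel; simp only [phiRel] at hrel; simp at hrel
      | mid i' s' k' =>
        rw [hq1] at hrel hft1
        simp only [phiRel] at hrel
        simp only [fpot] at hft1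
        have hk'v : (k' : ℕ) = t := by omega
        obtain ⟨hii, hss⟩ : i = i' ∧ s = s' := by
          rcases hrel with ⟨h1, h2, h3⟩ | ⟨h1, h2, h3⟩
          · exact ⟨h1, h2⟩
          · exact ⟨h1.symm, h2.symm⟩
        rw [← hii, ← hss]
        have : k' = (⟨t + 1 - 1, by omega⟩ : Fin (m + 1)) := Fin.ext (by simpa using hk'v)
        rw [this]
      | vc j' =>
        exfalso
        rw [hq1] at hrel hft1
        simp only [phiRel, or_false] at hrel
        simp only [fpot] at hft1
        have ha2 := hadj (t + 1) (by omega)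
        have hft2 : fpot (q (t + 1 + 1)) = (t : ℤ) + 2 := by
          rw [hf (t + 1 + 1) (by omega)]; push_cast; ring
        rw [hq1, phiGraph, SimpleGraph.fromRel_adj] at ha2
        have hrel2 := ha2.2
        cases hq2 : q (t + 1 + 1) with
        | vx i'' => rw [hq2] at hrel2; simp only [phiRel] at hrel2; simp at hrel2
        | vxg i'' => rw [hq2] at hrel2; simp only [phiRel] at hrel2; simp at hrel2
        | vc j'' => rw [hq2] at hrel2; simp only [phiRel] at hrel2; simp at hrel2
        | vcg j'' => rw [hq2] at hrel2; simp only [phiRel] at hrel2; simp at hrel2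
        | mid i'' s'' k'' =>
          rw [hq2] at hrel2 hft2
          simp only [phiRel, or_false] at hrel2
          simp only [fpot] at hft2
          obtain ⟨-, hk2⟩ := hrel2
          omega

lemma clause_traj {n m : ℕ} (sat : ThreeSat n m) (j : Fin m) (q : ℕ → PhiV n m)
    (hfeas : FeasiblePath (phiGraph sat) (PhiV.vc j) (PhiV.vcg j) q)
    (hA : arrivalTime (PhiV.vcg j) q = m + 2) :
    ∃ (i : Fin n) (s : Bool), (∃ l, sat.lit j l = (i, s)) ∧
      ∀ t (ht1 : 1 ≤ t) (ht2 : t ≤ (j : ℕ) + 1),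
        q t = PhiV.mid i s ⟨(j : ℕ) + 1 - t, by have := j.isLt; omega⟩ := by
  obtain ⟨h0, hex, harr, hstep⟩ := hfeas
  have hjm := j.isLt
  have hgoal : q (m + 2) = PhiV.vcg j := harr (m + 2) (by omega)
  have hg : ∀ t, t ≤ m + 2 → gpot j (q t) = ((m : ℤ) + 2) - t := by
    have := forced_down (phiGraph sat) (gpot j) (gpot_lip sat j) q hstep (m + 2)
      (by rw [hgoal, h0]
          show ((j : ℕ) : ℤ) - (j : ℕ) - ((m : ℤ) + 2 + (j : ℕ) - (j : ℕ)) = -((m + 2 : ℕ) : ℤ)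
          push_cast; ring)
    intro t ht
    have h := this t ht
    rw [h0] at h
    rw [h]
    show (m : ℤ) + 2 + (j : ℕ) - (j : ℕ) - t = (m : ℤ) + 2 - t
    ring
  have hadj : ∀ t, t < m + 2 → (phiGraph sat).Adj (q t) (q (t + 1)) := by
    intro t ht
    apply step_adj (F := gpot j) hstep
    rw [hg t (by omega), hg (t + 1) (by omega)]
    push_cast
    omega
  have hbase : ∃ (i : Fin n) (s : Bool), (∃ l, sat.lit j l = (i, s)) ∧
      q 1 = PhiV.mid i s ⟨(j : ℕ), by omega⟩ := by
    have ha := hadj 0 (by omega)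
    rw [h0] at ha
    rw [phiGraph, SimpleGraph.fromRel_adj] at ha
    have hrel := ha.2
    cases hq1 : q (0 + 1) with
    | vx i' => rw [hq1] at hrel; simp only [phiRel] at hrel; simp at hrel
    | vxg i' => rw [hq1] at hrel; simp only [phiRel] at hrel; simp at hrel
    | vc j' => rw [hq1] at hrel; simp only [phiRel] at hrel; simp at hrel
    | vcg j' => rw [hq1] at hrel; simp only [phiRel] at hrel; simp at hrel
    | mid i' s' k' =>
      rw [hq1] at hrel
      simp only [phiRel, or_false] at hrel
      obtain ⟨hlit, hk⟩ := hrel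
      refine ⟨i', s', hlit, ?_⟩
      have : k' = (⟨(j : ℕ), by omega⟩ : Fin (m + 1)) := Fin.ext (by simpa using hk)
      rw [this]
  obtain ⟨i, s, hlit, hs⟩ := hbase
  refine ⟨i, s, hlit, ?_⟩
  intro t
  induction t with
  | zero => intro h1 _; omega
  | succ t ih =>
    intro _ ht2
    rcases Nat.eq_zero_or_pos t with ht0 | ht0
    · subst ht0
      have : ((j : ℕ) + 1 - 1) = (j : ℕ) := by omega
      simpa [this] using hs
    · have hqt := ih ht0 (by omega)
      have ha := hadj t (by omega)
      have hgt1 : gpot j (q (t + 1)) = ((m : ℤ) + 1) - t := by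
        rw [hg (t + 1) (by omega)]; push_cast; ring
      rw [hqt, phiGraph, SimpleGraph.fromRel_adj] at ha
      have hrel := ha.2
      have hkval : ((⟨(j : ℕ) + 1 - t, by omega⟩ : Fin (m + 1)) : ℕ) = (j : ℕ) + 1 - t := rfl
      cases hq1 : q (t + 1) with
      | vx i' =>
        rw [hq1] at hrel
        simp only [phiRel, false_or] at hrel
        obtain ⟨-, hk⟩ := hrel
        omega
      | vxg i' =>
        rw [hq1] at hrel
        simp only [phiRel, or_false] at hrel
        obtain ⟨-, hk⟩ := hrel
        omega
      | vcg j' => rw [hq1] at hrel; simp only [phiRel] at hrel; simp at hrel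
      | vc j' =>
        exfalso
        rw [hq1] at hrel hgt1
        simp only [phiRel, false_or] at hrel
        simp only [gpot] at hgt1
        obtain ⟨-, hk⟩ := hrel
        omega
      | mid i' s' k' =>
        rw [hq1] at hrel hgt1
        simp only [phiRel] at hrel
        simp only [gpot] at hgt1
        have hk'v : (k' : ℕ) = (j : ℕ) - t := by omega
        obtain ⟨hii, hss⟩ : i = i' ∧ s = s' := by
          rcases hrel with ⟨h1, h2, h3⟩ | ⟨h1, h2, h3⟩
          · exact ⟨h1, h2⟩
          · exact ⟨h1.symm, h2.symm⟩
        rw [← hii, ← hss]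
        have : k' = (⟨(j : ℕ) + 1 - (t + 1), by omega⟩ : Fin (m + 1)) :=
          Fin.ext (by simp only [Fin.val_mk]; omega)
        rw [this]

theorem cheap_solution_gives_assignment' {n m : ℕ} (hm : 0 < m)
    (sat : ThreeSat n m) (p : Fin n ⊕ Fin m → ℕ → PhiV n m)
    (hp : IsSolution (phiGraph sat) phiStart phiGoal p)
    (hT : totalTime phiGoal p ≤ (n + m) * (m + 2)) :
    sat.Satisfiable ∧
    ∀ a : Fin n → Bool,
      (∀ i, a i = false ↔ ∃ (t : ℕ) (k : Fin (m + 1)),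
        p (Sum.inl i) t = PhiV.mid i true k) →
      sat.SatisfiedBy a := by
  obtain ⟨hfeas, hcol⟩ := hp
  -- lower bound on arrival times
  have hlb : ∀ r, m + 2 ≤ arrivalTime (phiGoal r) (p r) := by
    intro r
    cases r with
    | inl i =>
      have h := arrival_lb (phiGraph sat) fpot (fpot_lip sat) (hfeas (Sum.inl i))
      simp only [phiGoal, phiStart, Sum.elim_inl, fpot] at h
      rw [sub_zero, abs_of_nonneg (by positivity)] at h
      exact_mod_cast h
    | inr j =>
      have h := arrival_lb (phiGraph sat) (gpot j) (gpot_lip sat j) (hfeas (Sum.inr j))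
      simp only [phiGoal, phiStart, Sum.elim_inr, gpot] at h
      have h2 : ((m : ℤ) + 2) ≤ (arrivalTime (phiGoal (Sum.inr j)) (p (Sum.inr j)) : ℤ) := by
        calc ((m : ℤ) + 2)
            = -((((j : ℕ) : ℤ) - ((j : ℕ) : ℤ)) - ((m : ℤ) + 2 + ((j : ℕ) : ℤ) - ((j : ℕ) : ℤ))) := by
              ring
          _ ≤ |(((j : ℕ) : ℤ) - ((j : ℕ) : ℤ)) - ((m : ℤ) + 2 + ((j : ℕ) : ℤ) - ((j : ℕ) : ℤ))| :=
              neg_le_abs _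
          _ ≤ _ := h
      exact_mod_cast h2
  -- arrival times are all exactly m + 2
  have hT' : ∑ r : Fin n ⊕ Fin m, arrivalTime (phiGoal r) (p r) ≤ (n + m) * (m + 2) := hT
  have hconst : ∑ _r : Fin n ⊕ Fin m, (m + 2) = (n + m) * (m + 2) := by
    rw [Finset.sum_const, Finset.card_univ]
    simp [Fintype.card_sum, mul_comm]
  have hAeq : ∀ r, arrivalTime (phiGoal r) (p r) = m + 2 := by
    intro r
    by_contra hne
    have hlt : m + 2 < arrivalTime (phiGoal r) (p r) := lt_of_le_of_ne (hlb r) (Ne.symm hne)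
    have hstrict : ∑ _r : Fin n ⊕ Fin m, (m + 2) <
        ∑ r : Fin n ⊕ Fin m, arrivalTime (phiGoal r) (p r) :=
      Finset.sum_lt_sum (fun r _ => hlb r) ⟨r, Finset.mem_univ r, hlt⟩
    omega
  -- variable robot trajectories
  choose side hside using fun i : Fin n =>
    var_traj sat i (p (Sum.inl i)) (hfeas (Sum.inl i)) (hAeq (Sum.inl i))
  -- clause robots must use a literal disagreeing with the variable robot's side
  have hclause : ∀ j : Fin m, ∃ (i : Fin n) (s : Bool) (l : Fin 3),
      sat.lit j l = (i, s) ∧ s = !(side i) := by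
    intro j
    have hjm := j.isLt
    obtain ⟨i, s, ⟨l, hl⟩, htraj⟩ :=
      clause_traj sat j (p (Sum.inr j)) (hfeas (Sum.inr j)) (hAeq (Sum.inr j))
    refine ⟨i, s, l, hl, ?_⟩
    by_contra hb
    have hss : s = side i := by
      cases s <;> cases hsi : side i <;> simp_all
    have hnc := hcol (show (Sum.inl i : Fin n ⊕ Fin m) ≠ Sum.inr j by simp)
    apply hnc
    rcases Nat.even_or_odd (j : ℕ) with ⟨u, hu⟩ | ⟨u, hu⟩
    · -- even: meet at vertex at time u + 1
      left
      refine ⟨u + 1, ?_⟩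
      rw [hside i (u + 1) (by omega) (by omega), htraj (u + 1) (by omega) (by omega), ← hss]
      simp only [PhiV.mid.injEq, Fin.mk.injEq]
      exact ⟨trivial, trivial, by omega⟩
    · -- odd: swap along an edge between times u + 1 and u + 2
      right
      refine ⟨u + 1, ?_, ?_, ?_⟩
      · rw [hside i (u + 1) (by omega) (by omega), htraj (u + 1 + 1) (by omega) (by omega), ← hss]
        simp only [PhiV.mid.injEq, Fin.mk.injEq]
        exact ⟨trivial, trivial, by omega⟩
      · rw [hside i (u + 1 + 1) (by omega) (by omega), htraj (u + 1) (by omega) (by omega), ← hss]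
        simp only [PhiV.mid.injEq, Fin.mk.injEq]
        exact ⟨trivial, trivial, by omega⟩
      · rw [hside i (u + 1) (by omega) (by omega), hside i (u + 1 + 1) (by omega) (by omega)]
        simp only [ne_eq, PhiV.mid.injEq, Fin.mk.injEq]
        intro h
        omega
  -- characterization of visiting the upper path
  have hvis : ∀ i : Fin n,
      (∃ (t : ℕ) (k : Fin (m + 1)), p (Sum.inl i) t = PhiV.mid i true k) ↔ side i = true := by
    intro i
    constructor
    · rintro ⟨t, k, hk⟩
      by_contra hfalse
      have h0 : p (Sum.inl i) 0 = PhiV.vx i := (hfeas (Sum.inl i)).1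
      have hgt : ∀ t', m + 2 ≤ t' → p (Sum.inl i) t' = PhiV.vxg i := by
        intro t' ht'
        exact (hfeas (Sum.inl i)).2.2.1 t' (by rw [hAeq (Sum.inl i)]; exact ht')
      rcases Nat.eq_zero_or_pos t with ht0 | ht0
      · subst ht0; rw [h0] at hk; exact absurd hk (by simp)
      · rcases Nat.lt_or_ge t (m + 2) with ht2 | ht2
        · have := hside i t ht0 (by omega)
          rw [this] at hk
          simp only [PhiV.mid.injEq] at hk
          exact hfalse hk.2.1
        · rw [hgt t ht2] at hk; exact absurd hk (by simp)
    · intro htrue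
      exact ⟨1, ⟨0, by omega⟩, by rw [hside i 1 (by omega) (by omega), htrue]⟩
  -- part 2
  have part2 : ∀ a : Fin n → Bool,
      (∀ i, a i = false ↔ ∃ (t : ℕ) (k : Fin (m + 1)),
        p (Sum.inl i) t = PhiV.mid i true k) →
      sat.SatisfiedBy a := by
    intro a ha j
    obtain ⟨i, s, l, hl, hbs⟩ := hclause j
    refine ⟨l, ?_⟩
    rw [hl]
    show a i = s
    have h1 := ha i
    rw [hvis i] at h1
    rw [hbs]
    rcases hsi : side i <;> rcases hai : a i <;> simp_all
  refine ⟨⟨fun i => !(side i), part2 _ ?_⟩, part2⟩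
  intro i
  rw [hvis i]
  cases side i <;> simp

/-- If the reduced MPP instance `Φ` admits a solution with total arrival time
at most `(n + m)(m + 2)`, then the 3SAT instance is satisfiable; moreover, a
satisfying assignment is obtained by setting `x_i` to `false` if the variable
robot `r_{x_i}` traverses the `i`-th upper path (i.e. its path visits an
interior vertex of the upper path) and to `true` if it traverses the `i`-th
lower path. -/
theorem cheap_solution_gives_assignment {n m : ℕ} (hm : 0 < m)
    (sat : ThreeSat n m) (p : Fin n ⊕ Fin m → ℕ → PhiV n m)
    (hp : IsSolution (phiGraph sat) phiStart phiGoal p)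
    (hT : totalTime phiGoal p ≤ (n + m) * (m + 2)) :
    sat.Satisfiable ∧
    ∀ a : Fin n → Bool,
      (∀ i, a i = false ↔ ∃ (t : ℕ) (k : Fin (m + 1)),
        p (Sum.inl i) t = PhiV.mid i true k) →
      sat.SatisfiedBy a :=
  cheap_solution_gives_assignment' hm sat p hp hT

end MPPFormal
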